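/- For each j ≥ 0 let (t_{j,n})_{n≥1} be a sequence of nonnegative real numbers, and define sequences (s_{j,n})_{n≥1} recursively by s_{j,1} = t_{j,1} and, for n ≥ 2, s_{j,n} = Σ_{i=0}^{j} s_{i,n−1}·t_{j−i,n}. Suppose that for every j ≥ 0 there exists R_j > 0 such that for all n ≥ 1, |t_{j,n} − (1/(j!·n^j))·(1 − 1/n)| ≤ R_j/n^{j+2}. Then for every j ≥ 0 there exists C_j > 0 such that for all n ≥ 1, s_{j,n} ≤ C_j · n^{−1/(j+1)}. -/

import Mathlib

open Real in
lemma my_aux (x α C B r : ℝ) (hx : 1 ≤ x) (hα0 : 0 < α) (hα1 : α ≤ 1)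
    (hr : 0 < r) (hC : 0 < C) (hB : 0 ≤ B)
    (hmain : 2 * B ≤ C * Real.exp (-(2 * r)) * (1 - α)) :
    C * Real.exp (-(2 * r / x)) * x ^ (-α) * (1 - 1 / (x + 1) + r / (x + 1) ^ 2)
      + B * (x ^ (-α) / (x + 1))
      ≤ C * Real.exp (-(2 * r / (x + 1))) * (x + 1) ^ (-α) := by
  have hx0 : (0:ℝ) < x := by linarith
  set y : ℝ := x + 1 with hy_def
  have hy0 : (0:ℝ) < y := by simp only [hy_def]; linarith
  have hy1 : (1:ℝ) < y := by simp only [hy_def]; linarith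
  have hv0 : 0 < x ^ (-α) := Real.rpow_pos_of_pos hx0 _
  have hu0 : 0 < y ^ (-α) := Real.rpow_pos_of_pos hy0 _
  set e1 : ℝ := Real.exp (-(2 * r / x)) with he1_def
  set e2 : ℝ := Real.exp (-(2 * r / y)) with he2_def
  have he1pos : 0 < e1 := Real.exp_pos _
  have he2pos : 0 < e2 := Real.exp_pos _
  -- Bernoulli
  have hber : (1 - 1/y) ^ (1 - α) ≤ 1 - (1 - α) * (1/y) := by
    have h := _root_.rpow_one_add_le_one_add_mul_self (s := -(1/y)) (p := 1 - α)
      (by have : 1/y ≤ 1 := by rw [div_le_one hy0]; linarith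
          linarith)
      (by linarith) (by linarith)
    calc (1 - 1/y) ^ (1 - α) = (1 + -(1/y)) ^ (1 - α) := by ring_nf
      _ ≤ 1 + (1 - α) * -(1/y) := h
      _ = 1 - (1 - α) * (1/y) := by ring
  have hxy : x = y * (1 - 1/y) := by field_simp; rw [hy_def]; ring
  have hpow1 : x ^ ((1:ℝ) - α) = x ^ (-α) * x := by
    rw [show (1:ℝ) - α = -α + 1 by ring, Real.rpow_add hx0, Real.rpow_one]
  have hpow2 : y ^ ((1:ℝ) - α) = y ^ (-α) * y := by
    rw [show (1:ℝ) - α = -α + 1 by ring, Real.rpow_add hy0, Real.rpow_one]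
  have hA' : x ^ ((1:ℝ) - α) ≤ y ^ ((1:ℝ) - α) * (1 - (1 - α) * (1/y)) := by
    calc x ^ ((1:ℝ) - α) = (y * (1 - 1/y)) ^ ((1:ℝ) - α) := by rw [← hxy]
      _ = y ^ ((1:ℝ) - α) * (1 - 1/y) ^ ((1:ℝ) - α) := by
          apply Real.mul_rpow hy0.le
          rw [sub_nonneg, div_le_one hy0]; linarith
      _ ≤ _ := mul_le_mul_of_nonneg_left hber (Real.rpow_nonneg hy0.le _)
  have hA : x ^ (-α) * x ≤ y ^ (-α) * (y - (1 - α)) := by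
    rw [hpow1, hpow2] at hA'
    calc x ^ (-α) * x ≤ y ^ (-α) * y * (1 - (1 - α) * (1/y)) := hA'
      _ = y ^ (-α) * (y - (1 - α)) := by field_simp
  have hA2 : x ^ (-α) * (1 - 1/y) ≤ y ^ (-α) * (y - (1 - α)) / y := by
    have h1y : 1 - 1/y = x / y := by rw [hy_def]; field_simp; ring
    rw [h1y]
    calc x ^ (-α) * (x / y) = (x ^ (-α) * x) / y := by ring
      _ ≤ y ^ (-α) * (y - (1 - α)) / y := by
          exact (div_le_div_iff_of_pos_right hy0).mpr hA
  -- x^(-α) ≤ 2 y^(-α)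
  have hL2 : x ^ (-α) ≤ 2 * y ^ (-α) := by
    have h1 : x ^ (-α) ≤ (y/2) ^ (-α) := by
      apply Real.rpow_le_rpow_of_nonpos (by linarith) (by rw [hy_def]; linarith)
        (by linarith)
    have h2 : (y/2) ^ (-α) = 2 ^ α * y ^ (-α) := by
      rw [div_eq_mul_inv, Real.mul_rpow hy0.le (by norm_num),
        Real.inv_rpow (by norm_num), Real.rpow_neg (by norm_num : (0:ℝ) ≤ 2), inv_inv]
      ring
    have h3 : (2:ℝ) ^ α ≤ 2 := by
      calc (2:ℝ) ^ α ≤ (2:ℝ) ^ (1:ℝ) := Real.rpow_le_rpow_of_exponent_le (by norm_num) hα1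
        _ = 2 := Real.rpow_one 2
    calc x ^ (-α) ≤ (y/2) ^ (-α) := h1
      _ = 2 ^ α * y ^ (-α) := h2
      _ ≤ 2 * y ^ (-α) := mul_le_mul_of_nonneg_right h3 hu0.le
  -- exp facts
  have he1lb : Real.exp (-(2 * r)) ≤ e1 := by
    apply Real.exp_le_exp.mpr
    have : 2 * r / x ≤ 2 * r := div_le_self (by linarith) hx
    linarith
  have heC : e1 * (1 + 2 * r / y ^ 2) ≤ e2 := by
    have h1 : e2 = e1 * Real.exp (2 * r / x - 2 * r / y) := by
      rw [he1_def, he2_def, ← Real.exp_add]; ring_nf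
    have h2 : (2 * r / x - 2 * r / y) + 1 ≤ Real.exp (2 * r / x - 2 * r / y) :=
      Real.add_one_le_exp _
    have h3 : 2 * r / y ^ 2 ≤ 2 * r / x - 2 * r / y := by
      rw [div_sub_div _ _ hx0.ne' hy0.ne']
      rw [show 2 * r * y - x * (2 * r) = 2 * r by rw [hy_def]; ring]
      apply div_le_div_of_nonneg_left (by linarith) (by positivity)
      nlinarith
    calc e1 * (1 + 2 * r / y ^ 2) ≤ e1 * (1 + (2 * r / x - 2 * r / y)) := by
          apply mul_le_mul_of_nonneg_left (by linarith) he1pos.le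
      _ ≤ e1 * Real.exp (2 * r / x - 2 * r / y) := by
          apply mul_le_mul_of_nonneg_left (by linarith) he1pos.le
      _ = e2 := h1.symm
  have hkey : 2 * B ≤ C * e1 * (1 - α) := by
    calc 2 * B ≤ C * Real.exp (-(2 * r)) * (1 - α) := hmain
      _ ≤ C * e1 * (1 - α) := by
          apply mul_le_mul_of_nonneg_right (mul_le_mul_of_nonneg_left he1lb hC.le)
            (by linarith)
  have hscal : C * e1 * (1 - (1 - α)/y) + 2 * C * e1 * r / y ^ 2 + 2 * B / y ≤ C * e2 := by
    have h5 : C * (e1 * (1 + 2 * r / y ^ 2)) ≤ C * e2 := mul_le_mul_of_nonneg_left heC hC.le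
    have h6 : 2 * B / y ≤ C * e1 * (1 - α) / y := (div_le_div_iff_of_pos_right hy0).mpr hkey
    have h7 : C * e1 * (1 - (1 - α)/y) = C * e1 - C * e1 * (1 - α) / y := by ring
    have h8 : C * (e1 * (1 + 2 * r / y ^ 2)) = C * e1 + 2 * C * e1 * r / y ^ 2 := by ring
    linarith
  calc C * e1 * x ^ (-α) * (1 - 1/y + r / y ^ 2) + B * (x ^ (-α) / y)
      = (x ^ (-α) * (1 - 1/y)) * (C * e1) + x ^ (-α) * (C * e1 * r / y ^ 2)
          + x ^ (-α) * (B / y) := by ring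
    _ ≤ (y ^ (-α) * (y - (1 - α)) / y) * (C * e1) + (2 * y ^ (-α)) * (C * e1 * r / y ^ 2)
          + (2 * y ^ (-α)) * (B / y) := by
        gcongr <;> positivity
    _ = y ^ (-α) * (C * e1 * (1 - (1 - α)/y) + 2 * C * e1 * r / y ^ 2 + 2 * B / y) := by
        field_simp
    _ ≤ y ^ (-α) * (C * e2) := mul_le_mul_of_nonneg_left hscal hu0.le
    _ = C * e2 * y ^ (-α) := by ring

theorem stmt12 (t s : ℕ → ℕ → ℝ)
    (ht_nonneg : ∀ j n, 1 ≤ n → 0 ≤ t j n)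
    (hs1 : ∀ j, s j 1 = t j 1)
    (hsrec : ∀ j, ∀ n : ℕ, 2 ≤ n →
      s j n = ∑ i ∈ Finset.range (j + 1), s i (n - 1) * t (j - i) n)
    (ht : ∀ j : ℕ, ∃ R : ℝ, 0 < R ∧ ∀ n : ℕ, 1 ≤ n →
      |t j n - (1 / ((j.factorial : ℝ) * (n : ℝ) ^ j)) * (1 - 1 / (n : ℝ))|
        ≤ R / (n : ℝ) ^ (j + 2)) :
    ∀ j : ℕ, ∃ C : ℝ, 0 < C ∧ ∀ n : ℕ, 1 ≤ n →
      s j n ≤ C * (n : ℝ) ^ (-(1 : ℝ) / ((j : ℝ) + 1)) := by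
  choose R hRpos hR using ht
  -- upper bound on t from the abs estimate
  have htop : ∀ k n : ℕ, 1 ≤ n → t k n ≤
      1 / ((k.factorial : ℝ) * (n : ℝ) ^ k) * (1 - 1 / (n : ℝ)) + R k / (n : ℝ) ^ (k + 2) := by
    intro k n hn
    have h := abs_le.mp (hR k n hn)
    linarith [h.2]
  have ht0' : ∀ n : ℕ, 1 ≤ n → t 0 n ≤ 1 - 1 / (n : ℝ) + R 0 / (n : ℝ) ^ 2 := by
    intro n hn
    have h := htop 0 n hn
    norm_num [Nat.factorial] at h
    rw [one_div]
    exact h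
  have htk : ∀ k n : ℕ, 1 ≤ k → 1 ≤ n → t k n ≤ (1 + R k) / (n : ℝ) := by
    intro k n hk hn
    have h := htop k n hn
    have hn1 : (1:ℝ) ≤ (n:ℝ) := by exact_mod_cast hn
    have hnpos : (0:ℝ) < (n:ℝ) := by linarith
    have hf : (1:ℝ) ≤ (k.factorial : ℝ) := by exact_mod_cast k.factorial_pos
    have hpow : (n:ℝ) ≤ (n:ℝ) ^ k := by
      calc (n:ℝ) = (n:ℝ) ^ 1 := (pow_one _).symm
        _ ≤ (n:ℝ) ^ k := pow_le_pow_right₀ hn1 hk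
    have h1 : 1 / ((k.factorial : ℝ) * (n : ℝ) ^ k) * (1 - 1 / (n : ℝ)) ≤ 1 / (n:ℝ) := by
      have hden : (n:ℝ) ≤ (k.factorial : ℝ) * (n : ℝ) ^ k := by nlinarith
      have hd1 : 1 / ((k.factorial : ℝ) * (n : ℝ) ^ k) ≤ 1 / (n:ℝ) :=
        one_div_le_one_div_of_le hnpos hden
      have ha0 : 0 ≤ 1 / ((k.factorial : ℝ) * (n : ℝ) ^ k) := by positivity
      have hb0 : 0 ≤ 1 - 1 / (n:ℝ) := by
        have : 1 / (n:ℝ) ≤ 1 := by rw [div_le_one hnpos]; exact hn1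
        linarith
      have hb1 : 1 - 1 / (n:ℝ) ≤ 1 := by
        have : 0 ≤ 1 / (n:ℝ) := by positivity
        linarith
      nlinarith
    have h2 : R k / (n : ℝ) ^ (k + 2) ≤ R k / (n:ℝ) := by
      have hpow2 : (n:ℝ) ≤ (n:ℝ) ^ (k + 2) := by
        calc (n:ℝ) = (n:ℝ) ^ 1 := (pow_one _).symm
          _ ≤ (n:ℝ) ^ (k + 2) := pow_le_pow_right₀ hn1 (by omega)
      exact div_le_div_of_nonneg_left (hRpos k).le hnpos hpow2
    calc t k n ≤ _ := h
      _ ≤ 1 / (n:ℝ) + R k / (n:ℝ) := by linarith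
      _ = (1 + R k) / (n:ℝ) := by ring
  -- nonnegativity of s
  have hs_nonneg : ∀ n : ℕ, 1 ≤ n → ∀ j, 0 ≤ s j n := by
    intro n hn
    induction n, hn using Nat.le_induction with
    | base => intro j; rw [hs1]; exact ht_nonneg j 1 le_rfl
    | succ n hn ihn =>
      intro j
      rw [hsrec j (n + 1) (by omega)]
      apply Finset.sum_nonneg
      intro i _
      have hn1 : n + 1 - 1 = n := by omega
      rw [hn1]
      exact mul_nonneg (ihn i) (ht_nonneg _ _ (by omega))
  intro j
  induction j using Nat.strong_induction_on with
  | _ j ih =>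
  have ih' : ∀ m : ℕ, ∃ C : ℝ, 0 < C ∧ (m < j → ∀ n : ℕ, 1 ≤ n →
      s m n ≤ C * (n : ℝ) ^ (-(1 : ℝ) / ((m : ℝ) + 1))) := by
    intro m
    by_cases h : m < j
    · obtain ⟨C, hC, hC2⟩ := ih m h
      exact ⟨C, hC, fun _ => hC2⟩
    · exact ⟨1, one_pos, fun h' => absurd h' h⟩
  choose Cf hCfpos hCf using ih'
  set α : ℝ := 1 / ((j : ℝ) + 1) with hα_def
  have hj0R : (0:ℝ) ≤ (j:ℝ) := Nat.cast_nonneg j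
  have hα0 : 0 < α := by positivity
  have hα1 : α ≤ 1 := by rw [hα_def, div_le_one (by linarith)]; linarith
  set c : ℝ := 2 * R 0 with hc_def
  set B : ℝ := ∑ i ∈ Finset.range j, Cf i * (1 + R (j - i)) with hB_def
  have hB0 : 0 ≤ B := by
    apply Finset.sum_nonneg
    intro i _
    exact mul_nonneg (hCfpos i).le (by linarith [hRpos (j - i)])
  set C : ℝ := (R j + 2 * B * ((j:ℝ) + 1) + 1) * Real.exp c with hC_def
  have hC0 : 0 < C := by
    apply mul_pos _ (Real.exp_pos c)
    nlinarith [hRpos j]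
  have hee : Real.exp c * Real.exp (-c) = 1 := by rw [← Real.exp_add]; simp
  have hCe : C * Real.exp (-c) = R j + 2 * B * ((j:ℝ) + 1) + 1 := by
    rw [hC_def]; rw [mul_assoc, hee, mul_one]
  have hmain : 2 * B ≤ C * Real.exp (-(2 * R 0)) * (1 - α) := by
    rcases Nat.eq_zero_or_pos j with hj | hj
    · subst hj
      have hB00 : B = 0 := by rw [hB_def]; simp
      have hα11 : α = 1 := by rw [hα_def]; norm_num
      rw [hB00, hα11]; norm_num
    · have hj1 : (1:ℝ) ≤ (j:ℝ) := by exact_mod_cast hj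
      have h1α : 1 - α = (j:ℝ) / ((j:ℝ) + 1) := by
        rw [hα_def]; field_simp; ring
      have hrw : C * Real.exp (-(2 * R 0)) * (1 - α)
          = (R j + 2 * B * ((j:ℝ) + 1) + 1) * ((j:ℝ) / ((j:ℝ) + 1)) := by
        rw [← hc_def, ← h1α, hCe]
      rw [hrw]
      rw [← mul_div_assoc, le_div_iff₀ (by linarith)]
      nlinarith [hRpos j, hB0, hj1, mul_nonneg hB0 hj0R,
        mul_nonneg (mul_nonneg (by linarith : (0:ℝ) ≤ 2 * B)
          (by linarith : (0:ℝ) ≤ (j:ℝ) + 1)) (by linarith : (0:ℝ) ≤ (j:ℝ) - 1),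
        mul_nonneg (hRpos j).le hj0R]
  refine ⟨C, hC0, ?_⟩
  have key : ∀ n : ℕ, 1 ≤ n → s j n ≤ C * Real.exp (-(c / (n:ℝ))) * (n:ℝ) ^ (-α) := by
    intro n hn
    induction n, hn using Nat.le_induction with
    | base =>
      have h := htop j 1 le_rfl
      norm_num at h
      rw [hs1 j]
      have : s j 1 ≤ R j := by rw [hs1 j]; exact h
      rw [← hs1 j] at h ⊢
      simp only [Nat.cast_one, Real.one_rpow, mul_one, div_one]
      calc s j 1 ≤ R j := this
        _ ≤ R j + 2 * B * ((j:ℝ) + 1) + 1 := by nlinarith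
        _ = C * Real.exp (-c) := hCe.symm
    | succ n hn ihn =>
      have hx : (1:ℝ) ≤ (n:ℝ) := by exact_mod_cast hn
      have hx0 : (0:ℝ) < (n:ℝ) := by linarith
      have hcast : ((n + 1 : ℕ) : ℝ) = (n:ℝ) + 1 := by push_cast; ring
      have hrec := hsrec j (n + 1) (by omega)
      have hn1 : n + 1 - 1 = n := by omega
      rw [hn1] at hrec
      rw [Finset.sum_range_succ, Nat.sub_self] at hrec
      -- bound the lower-order sum
      have hsum : ∑ i ∈ Finset.range j, s i n * t (j - i) (n + 1)
          ≤ B * ((n:ℝ) ^ (-α) / ((n:ℝ) + 1)) := by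
        rw [hB_def, Finset.sum_mul]
        apply Finset.sum_le_sum
        intro i hi
        have hij : i < j := Finset.mem_range.mp hi
        have hsi : s i n ≤ Cf i * (n : ℝ) ^ (-(1 : ℝ) / ((i : ℝ) + 1)) :=
          hCf i hij n hn
        have hexp : (-(1 : ℝ) / ((i : ℝ) + 1)) ≤ -α := by
          rw [hα_def, neg_div, neg_le_neg_iff]
          apply one_div_le_one_div_of_le (by positivity)
          have : (i:ℝ) ≤ (j:ℝ) := by exact_mod_cast hij.le
          linarith
        have hsi2 : s i n ≤ Cf i * (n : ℝ) ^ (-α) := by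
          calc s i n ≤ Cf i * (n : ℝ) ^ (-(1 : ℝ) / ((i : ℝ) + 1)) := hsi
            _ ≤ Cf i * (n : ℝ) ^ (-α) := by
                apply mul_le_mul_of_nonneg_left _ (hCfpos i).le
                exact Real.rpow_le_rpow_of_exponent_le hx hexp
        have hti : t (j - i) (n + 1) ≤ (1 + R (j - i)) / ((n:ℝ) + 1) := by
          have := htk (j - i) (n + 1) (by omega) (by omega)
          rwa [hcast] at this
        calc s i n * t (j - i) (n + 1)
            ≤ (Cf i * (n : ℝ) ^ (-α)) * ((1 + R (j - i)) / ((n:ℝ) + 1)) := by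
              apply mul_le_mul hsi2 hti (ht_nonneg _ _ (by omega))
              exact mul_nonneg (hCfpos i).le (Real.rpow_nonneg hx0.le _)
          _ = Cf i * (1 + R (j - i)) * ((n:ℝ) ^ (-α) / ((n:ℝ) + 1)) := by ring
      have ht0b : t 0 (n + 1) ≤ 1 - 1 / ((n:ℝ) + 1) + R 0 / ((n:ℝ) + 1) ^ 2 := by
        have := ht0' (n + 1) (by omega)
        rwa [hcast] at this
      have hlast : s j n * t 0 (n + 1)
          ≤ (C * Real.exp (-(c / (n:ℝ))) * (n:ℝ) ^ (-α))
              * (1 - 1 / ((n:ℝ) + 1) + R 0 / ((n:ℝ) + 1) ^ 2) := by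
        apply mul_le_mul ihn ht0b (ht_nonneg _ _ (by omega))
        exact mul_nonneg (mul_nonneg hC0.le (Real.exp_pos _).le) (Real.rpow_nonneg hx0.le _)
      have haux := my_aux (n:ℝ) α C B (R 0) hx hα0 hα1 (hRpos 0) hC0 hB0 hmain
      rw [← hc_def] at haux
      rw [hrec, hcast]
      calc ∑ i ∈ Finset.range j, s i n * t (j - i) (n + 1) + s j n * t 0 (n + 1)
          ≤ B * ((n:ℝ) ^ (-α) / ((n:ℝ) + 1))
            + (C * Real.exp (-(c / (n:ℝ))) * (n:ℝ) ^ (-α))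
              * (1 - 1 / ((n:ℝ) + 1) + R 0 / ((n:ℝ) + 1) ^ 2) := by
            exact add_le_add hsum hlast
        _ ≤ C * Real.exp (-(c / ((n:ℝ) + 1))) * ((n:ℝ) + 1) ^ (-α) := by
            linarith [haux]
  intro n hn
  have hexp1 : Real.exp (-(c / (n:ℝ))) ≤ 1 := by
    rw [Real.exp_le_one_iff]
    have hn0 : (0:ℝ) < (n:ℝ) := by exact_mod_cast hn
    have h2 : 0 ≤ c / (n:ℝ) := div_nonneg (by rw [hc_def]; linarith [hRpos 0]) hn0.le
    linarith
  have hrpow0 : 0 ≤ (n:ℝ) ^ (-α) := Real.rpow_nonneg (by positivity) _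
  have hrw : (-(1 : ℝ)) / ((j : ℝ) + 1) = -α := by rw [hα_def, neg_div]
  rw [hrw]
  calc s j n ≤ C * Real.exp (-(c / (n:ℝ))) * (n:ℝ) ^ (-α) := key n hn
    _ ≤ C * 1 * (n:ℝ) ^ (-α) := by
        apply mul_le_mul_of_nonneg_right _ hrpow0
        exact mul_le_mul_of_nonneg_left hexp1 hC0.le
    _ = C * (n:ℝ) ^ (-α) := by ring
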